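/- Let w ∈ S_n be a non-identity permutation with last descent g, let m > g be the largest index with w(m) < w(g), and set w' = w t_{g↔m}. If w is not dominant but w' is dominant, then |λ(w')| ≤ |λ(w)| − 2; in particular (g, w(m)) forms an entire connected component of D(w), and λ(w') contains neither (g−1, w(m)) nor (g, w(m)−1). -/

import Mathlib

open MvPolynomial

/-- The Rothe diagram of `w` (0-based): boxes `(i,j)` with `j < w i` and `i < w⁻¹ j`. -/
def rotheDiagram {n : ℕ} (w : Equiv.Perm (Fin n)) : Finset (Fin n × Fin n) :=
  Finset.univ.filter fun p => p.2 < w p.1 ∧ p.1 < w⁻¹ p.2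

/-- The essential set `E(w)`. -/
def essentialSet {n : ℕ} (w : Equiv.Perm (Fin n)) : Finset (Fin n × Fin n) :=
  (rotheDiagram w).filter fun p =>
    (∀ q ∈ rotheDiagram w, ¬(q.1 = p.1 ∧ (q.2 : ℕ) = (p.2 : ℕ) + 1)) ∧
    (∀ q ∈ rotheDiagram w, ¬((q.1 : ℕ) = (p.1 : ℕ) + 1 ∧ q.2 = p.2))

/-- The effective region `λ(w)`: all boxes weakly northwest of some essential set box. -/
def effRegion {n : ℕ} (w : Equiv.Perm (Fin n)) : Finset (Fin n × Fin n) :=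
  Finset.univ.filter fun p => ∃ q ∈ essentialSet w, p.1 ≤ q.1 ∧ p.2 ≤ q.2

/-- `w` is dominant if its Rothe diagram equals its effective region. -/
def IsDominant {n : ℕ} (w : Equiv.Perm (Fin n)) : Prop :=
  rotheDiagram w = effRegion w


lemma mem_rothe {n : ℕ} (w : Equiv.Perm (Fin n)) (p : Fin n × Fin n) :
    p ∈ rotheDiagram w ↔ p.2 < w p.1 ∧ p.1 < w⁻¹ p.2 := by
  simp [rotheDiagram]

lemma essential_subset_rothe {n : ℕ} (w : Equiv.Perm (Fin n)) :
    essentialSet w ⊆ rotheDiagram w := Finset.filter_subset _ _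

lemma effRegion_closed {n : ℕ} (w : Equiv.Perm (Fin n)) :
    ∀ p ∈ effRegion w, ∀ p' : Fin n × Fin n, p'.1 ≤ p.1 → p'.2 ≤ p.2 → p' ∈ effRegion w := by
  intro p hp p' h1 h2
  simp only [effRegion, Finset.mem_filter, Finset.mem_univ, true_and] at *
  obtain ⟨q, hq, g1, g2⟩ := hp
  exact ⟨q, hq, h1.trans g1, h2.trans g2⟩

lemma rothe_subset_eff {n : ℕ} (w : Equiv.Perm (Fin n)) :
    rotheDiagram w ⊆ effRegion w := by
  have key : ∀ (k : ℕ) (p : Fin n × Fin n), 2*n - ((p.1:ℕ)+(p.2:ℕ)) ≤ k → p ∈ rotheDiagram w →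
      ∃ q ∈ essentialSet w, p.1 ≤ q.1 ∧ p.2 ≤ q.2 := by
    intro k
    induction k with
    | zero =>
      intro p h hp
      have := p.1.isLt; have := p.2.isLt; omega
    | succ k ih =>
      intro p hk hp
      by_cases he : p ∈ essentialSet w
      · exact ⟨p, he, le_refl _, le_refl _⟩
      · by_cases hAc : ∀ q ∈ rotheDiagram w, ¬(q.1 = p.1 ∧ (q.2 : ℕ) = (p.2 : ℕ) + 1)
        · by_cases hBc : ∀ q ∈ rotheDiagram w, ¬((q.1 : ℕ) = (p.1 : ℕ) + 1 ∧ q.2 = p.2)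
          · exact absurd (Finset.mem_filter.mpr ⟨hp, hAc, hBc⟩) he
          · push_neg at hBc
            obtain ⟨q, hq, h1, h2⟩ := hBc
            obtain ⟨r, hr, a1, a2⟩ := ih q (by omega) hq
            refine ⟨r, hr, ?_, ?_⟩
            · exact le_trans (Fin.le_def.mpr (by omega)) a1
            · exact le_trans (le_of_eq h2.symm) a2
        · push_neg at hAc
          obtain ⟨q, hq, h1, h2⟩ := hAc
          obtain ⟨r, hr, a1, a2⟩ := ih q (by rw [h1]; omega) hq
          refine ⟨r, hr, le_trans (le_of_eq h1.symm) a1, le_trans (Fin.le_def.mpr (by omega)) a2⟩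
  intro p hp
  simp only [effRegion, Finset.mem_filter, Finset.mem_univ, true_and]
  exact key (2*n) p (by omega) hp

lemma isDominant_of_closed {n : ℕ} (w : Equiv.Perm (Fin n))
    (hcl : ∀ p ∈ rotheDiagram w, ∀ p' : Fin n × Fin n, p'.1 ≤ p.1 → p'.2 ≤ p.2 → p' ∈ rotheDiagram w) :
    IsDominant w := by
  unfold IsDominant
  apply Finset.Subset.antisymm (rothe_subset_eff w)
  intro p hp
  simp only [effRegion, Finset.mem_filter, Finset.mem_univ, true_and] at hp
  obtain ⟨q, hq, h1, h2⟩ := hp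
  exact hcl q (essential_subset_rothe w hq) p h1 h2

set_option maxHeartbeats 2000000 in
/-- Transition step, dominant case (from the proof of Proposition 4.1): with `w ≠ 1`
of last descent `g`, `m > g` maximal with `w(m) < w(g)` and `w' = w t_{g↔m}`, if `w` is
not dominant but `w'` is dominant, then `|λ(w')| ≤ |λ(w)| - 2`; in particular
`(g, w(m))` forms an entire connected component of `D(w)` (no other box of `D(w)` is
edge-adjacent to it), and `λ(w')` contains neither `(g-1, w(m))` nor `(g, w(m)-1)`. -/
theorem transition_dominant_drop (n : ℕ) (w : Equiv.Perm (Fin n)) (hw : w ≠ 1)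
    (g m : Fin n) (hg1 : (g : ℕ) + 1 < n)
    (hgdesc : w ⟨(g : ℕ) + 1, hg1⟩ < w g)
    (hglast : ∀ (j : Fin n) (hj : (j : ℕ) + 1 < n), w ⟨(j : ℕ) + 1, hj⟩ < w j → j ≤ g)
    (hgm : g < m) (hwm : w m < w g)
    (hmmax : ∀ m' : Fin n, g < m' → w m' < w g → m' ≤ m)
    (hnd : ¬ IsDominant w) (hd : IsDominant (w * Equiv.swap g m)) :
    (effRegion (w * Equiv.swap g m)).card + 2 ≤ (effRegion w).card ∧
    (∀ q ∈ rotheDiagram w, q ≠ (g, w m) →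
      ¬(((q.1 : ℕ) = (g : ℕ) ∧
            ((q.2 : ℕ) = (w m : ℕ) + 1 ∨ (q.2 : ℕ) + 1 = (w m : ℕ))) ∨
        ((q.2 : ℕ) = (w m : ℕ) ∧
            ((q.1 : ℕ) = (g : ℕ) + 1 ∨ (q.1 : ℕ) + 1 = (g : ℕ))))) ∧
    (∀ q ∈ effRegion (w * Equiv.swap g m),
      ¬((q.1 : ℕ) + 1 = (g : ℕ) ∧ (q.2 : ℕ) = (w m : ℕ))) ∧
    (∀ q ∈ effRegion (w * Equiv.swap g m),
      ¬((q.1 : ℕ) = (g : ℕ) ∧ (q.2 : ℕ) + 1 = (w m : ℕ))) := by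
  set W := w * Equiv.swap g m with hWdef
  -- basic applications
  have hgmn : (g : ℕ) < (m : ℕ) := hgm
  have hWg : W g = w m := by
    rw [hWdef, Equiv.Perm.mul_apply, Equiv.swap_apply_left]
  have hWm : W m = w g := by
    rw [hWdef, Equiv.Perm.mul_apply, Equiv.swap_apply_right]
  have hWo : ∀ i : Fin n, i ≠ g → i ≠ m → W i = w i := by
    intro i h1 h2
    rw [hWdef, Equiv.Perm.mul_apply, Equiv.swap_apply_of_ne_of_ne h1 h2]
  have hminv : w⁻¹ (w m) = m := w.symm_apply_apply m
  have hginv : w⁻¹ (w g) = g := w.symm_apply_apply g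
  have hWinv : ∀ j, W⁻¹ j = Equiv.swap g m (w⁻¹ j) := by
    intro j
    rw [hWdef, mul_inv_rev, Equiv.Perm.mul_apply, Equiv.swap_inv]
  have hWic : W⁻¹ (w m) = g := by rw [hWinv, hminv, Equiv.swap_apply_right]
  have hWib : W⁻¹ (w g) = m := by rw [hWinv, hginv, Equiv.swap_apply_left]
  have hWio : ∀ j : Fin n, j ≠ w m → j ≠ w g → W⁻¹ j = w⁻¹ j := by
    intro j h1 h2
    rw [hWinv]
    apply Equiv.swap_apply_of_ne_of_ne
    · intro h; exact h2 (by rw [← hginv] at h; exact w⁻¹.injective h ▸ rfl)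
    · intro h; exact h1 (by rw [← hminv] at h; exact w⁻¹.injective h ▸ rfl)
  have hstep : ∀ jv : ℕ, (g:ℕ) < jv → ∀ (h2 : jv + 1 < n), w ⟨jv, by omega⟩ < w ⟨jv+1, h2⟩ := by
    intro jv h1 h2
    rcases lt_or_ge (w ⟨jv, by omega⟩) (w ⟨jv+1, h2⟩) with h | h
    · exact h
    · exfalso
      rcases h.lt_or_eq with h' | h'
      · have h3 := hglast ⟨jv, by omega⟩ h2 h'
        have h4 : jv ≤ (g:ℕ) := h3
        omega
      · have := w.injective h'
        have : jv + 1 = jv := congrArg Fin.val this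
        omega
  have hmono : ∀ kv : ℕ, ∀ (hkn : kv < n), ∀ jv : ℕ, ∀ (hjn : jv < n), (g:ℕ) < jv → jv < kv →
      w ⟨jv, hjn⟩ < w ⟨kv, hkn⟩ := by
    intro kv
    induction kv with
    | zero => intro _ jv _ _ h; exact absurd h (Nat.not_lt_zero jv)
    | succ kv ih =>
      intro hkn jv hjn hj hjk
      rcases Nat.lt_or_ge jv kv with h | h
      · exact (ih (by omega) jv hjn hj h).trans (hstep kv (by omega) hkn)
      · have hjv : jv = kv := by omega
        subst hjv
        exact hstep jv hj hkn
  have hless : ∀ k : Fin n, g < k → k < m → w k < w m := by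
    intro k h1 h2
    have := hmono (m : ℕ) m.isLt (k : ℕ) k.isLt h1 h2
    simpa using this
  have hpos : ∀ k : Fin n, m < k → w g < w k := by
    intro k hk
    have hgk : g < k := hgm.trans hk
    rcases lt_trichotomy (w k) (w g) with h | h | h
    · exact absurd (hmmax k hgk h) (not_le.mpr hk)
    · exfalso; have he := w.injective h; rw [he] at hgk; exact lt_irrefl _ hgk
    · exact h
  have hbet : ∀ v : Fin n, w m < v → v < w g → w⁻¹ v < g := by
    intro v h1 h2
    have hwk : w (w⁻¹ v) = v := w.apply_symm_apply v
    rcases lt_trichotomy (w⁻¹ v) g with h | h | h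
    · exact h
    · exfalso; rw [h] at hwk; rw [hwk] at h2; exact lt_irrefl _ h2
    · exfalso
      rcases lt_trichotomy (w⁻¹ v) m with hm | hm | hm
      · have := hless (w⁻¹ v) h hm
        rw [hwk] at this
        exact absurd h1 (not_lt.mpr this.le)
      · rw [hm] at hwk; rw [hwk] at h1; exact lt_irrefl _ h1
      · have := hpos (w⁻¹ v) hm
        rw [hwk] at this
        exact absurd h2 (not_lt.mpr this.le)
  have hchar : ∀ p : Fin n × Fin n, p ∈ rotheDiagram W ↔ (p ∈ rotheDiagram w ∧ p ≠ (g, w m)) := by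
    rintro ⟨i, j⟩
    rw [mem_rothe, mem_rothe]
    simp only [ne_eq, Prod.mk.injEq, not_and]
    rcases eq_or_ne g i with h | hig0
    · subst h
      rw [hWg]
      constructor
      · rintro ⟨h1, h2⟩
        have hjc : j ≠ w m := ne_of_lt h1
        have hjb : j ≠ w g := ne_of_lt (h1.trans hwm)
        rw [hWio j hjc hjb] at h2
        exact ⟨⟨h1.trans hwm, h2⟩, fun _ => hjc⟩
      · rintro ⟨⟨h1, h2⟩, h3⟩
        have hjc : j ≠ w m := h3 rfl
        have hjlt : j < w m := by
          rcases lt_or_ge j (w m) with h | h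
          · exact h
          · exfalso
            have hcj : w m < j := lt_of_le_of_ne h (Ne.symm hjc)
            exact absurd h2 (not_lt.mpr (hbet j hcj h1).le)
        refine ⟨hjlt, ?_⟩
        rw [hWio j hjc (ne_of_lt (hjlt.trans hwm))]
        exact h2
    · have hig : i ≠ g := hig0.symm
      rcases eq_or_ne m i with h | him0
      · subst h
        constructor
        · rintro ⟨h1, h2⟩
          exfalso
          rw [hWm] at h1
          have hjc : j ≠ w m := by
            rintro rfl
            rw [hWic] at h2
            exact absurd hgm (not_lt.mpr h2.le)
          have hjb : j ≠ w g := ne_of_lt h1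
          rw [hWio j hjc hjb] at h2
          have := hpos (w⁻¹ j) h2
          rw [show ∀ x, w (w⁻¹ x) = x from w.apply_symm_apply] at this
          exact absurd h1 (not_lt.mpr this.le)
        · rintro ⟨⟨h1, h2⟩, -⟩
          exfalso
          have := hpos (w⁻¹ j) h2
          rw [show ∀ x, w (w⁻¹ x) = x from w.apply_symm_apply] at this
          exact absurd (h1.trans hwm) (not_lt.mpr this.le)
      · have him : i ≠ m := him0.symm
        rw [hWo i hig him]
        constructor
        · rintro ⟨h1, h2⟩
          refine ⟨⟨h1, ?_⟩, fun h => absurd h hig⟩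
          rcases eq_or_ne j (w m) with rfl | hjc
          · rw [hWic] at h2
            rw [hminv]
            exact h2.trans hgm
          · rcases eq_or_ne j (w g) with rfl | hjb
            · rw [hWib] at h2
              rw [hginv]
              by_contra hgi
              have hgi' : g < i := lt_of_le_of_ne (not_lt.mp hgi) (Ne.symm hig)
              have him' : i < m := lt_of_le_of_ne (not_lt.mp (not_lt.mpr h2.le)) him
              exact absurd h1 (not_lt.mpr ((hless i hgi' h2).trans hwm).le)
            · rw [hWio j hjc hjb] at h2
              exact h2
        · rintro ⟨⟨h1, h2⟩, -⟩
          refine ⟨h1, ?_⟩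
          rcases eq_or_ne j (w m) with rfl | hjc
          · rw [hminv] at h2
            rw [hWic]
            by_contra hgi
            have hgi' : g < i := lt_of_le_of_ne (not_lt.mp hgi) (Ne.symm hig)
            exact absurd h1 (not_lt.mpr (hless i hgi' h2).le)
          · rcases eq_or_ne j (w g) with rfl | hjb
            · rw [hginv] at h2
              rw [hWib]
              exact h2.trans hgm
            · rw [hWio j hjc hjb]
              exact h2
  have hmemgc : (g, w m) ∈ rotheDiagram w := by
    rw [mem_rothe]
    exact ⟨hwm, by rw [hminv]; exact hgm⟩
  have herase : rotheDiagram W = (rotheDiagram w).erase (g, w m) := by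
    ext p
    rw [hchar, Finset.mem_erase]
    tauto
  have hDW : rotheDiagram W = effRegion W := hd
  have hA : ∀ q ∈ effRegion W, ¬((q.1:ℕ)+1 = (g:ℕ) ∧ (q.2:ℕ) = ((w m : Fin n) : ℕ)) := by
    rintro ⟨i, j⟩ hq hq2
    obtain ⟨h1, h2⟩ := hq2
    dsimp only at h1 h2
    have hj : j = w m := Fin.ext h2
    subst hj
    have higlt : i < g := Fin.lt_def.mpr (by omega)
    have hig : i ≠ g := ne_of_lt higlt
    have him : i ≠ m := ne_of_lt (higlt.trans hgm)
    have hqD : (i, w m) ∈ rotheDiagram W := by rw [hDW]; exact hq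
    rw [mem_rothe] at hqD
    obtain ⟨hcwi, -⟩ := hqD
    rw [hWo i hig him] at hcwi
    by_cases hex : ∃ j0 : Fin n, j0 < w m ∧ w⁻¹ j0 < g
    · obtain ⟨j0, hj0c, hj0g⟩ := hex
      have hmem : (i, j0) ∈ effRegion W :=
        effRegion_closed W _ hq (i, j0) (le_refl i) (le_of_lt hj0c)
      rw [← hDW, mem_rothe] at hmem
      obtain ⟨-, hlt⟩ := hmem
      rw [hWio j0 (ne_of_lt hj0c) (ne_of_lt (hj0c.trans hwm))] at hlt
      have a1 : (i:ℕ) < ((w⁻¹ j0 : Fin n) : ℕ) := hlt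
      have a2 : ((w⁻¹ j0 : Fin n) : ℕ) < (g:ℕ) := hj0g
      omega
    · push_neg at hex
      have hex' : ∀ j0 : Fin n, j0 < w m → g < w⁻¹ j0 := by
        intro j0 h
        rcases (hex j0 h).lt_or_eq with h' | h'
        · exact h'
        · exfalso
          have hgj : w g = j0 := by rw [h', show ∀ x, w (w⁻¹ x) = x from w.apply_symm_apply]
          rw [← hgj] at h
          exact absurd (h.trans hwm) (lt_irrefl _)
      have hdom : IsDominant w := by
        apply isDominant_of_closed
        rintro p hp ⟨i', j'⟩ hle1 hle2
        by_cases hpgc : p = (g, w m)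
        · subst hpgc
          simp only at hle1 hle2
          by_cases hi'g : i' = g
          · subst hi'g
            rcases hle2.lt_or_eq with h | h
            · rw [mem_rothe]
              exact ⟨h.trans hwm, hex' j' h⟩
            · rw [show ((i', j') : Fin n × Fin n) = (i', w m) from by rw [h]]
              exact hmemgc
          · have hi'lt : i' < g := lt_of_le_of_ne hle1 hi'g
            have hi'i : i' ≤ i := Fin.le_def.mpr (by have := Fin.lt_def.mp hi'lt; omega)
            have : (i', j') ∈ effRegion W := effRegion_closed W _ hq (i', j') hi'i hle2
            rw [← hDW, hchar] at this
            exact this.1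
        · have hp' : p ∈ rotheDiagram W := (hchar p).mpr ⟨hp, hpgc⟩
          rw [hDW] at hp'
          have := effRegion_closed W p hp' (i', j') hle1 hle2
          rw [← hDW, hchar] at this
          exact this.1
      exact hnd hdom
  have hB : ∀ q ∈ effRegion W, ¬((q.1:ℕ) = (g:ℕ) ∧ (q.2:ℕ)+1 = ((w m : Fin n) : ℕ)) := by
    rintro ⟨i, j⟩ hq hq2
    obtain ⟨h1, h2⟩ := hq2
    dsimp only at h1 h2
    have hi : g = i := (Fin.ext h1).symm
    subst hi
    have hjc : j ≠ w m := by intro h; rw [h] at h2; omega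
    have hqD : (g, j) ∈ rotheDiagram W := by rw [hDW]; exact hq
    rw [mem_rothe] at hqD
    obtain ⟨hjlt, hinv⟩ := hqD
    dsimp only at hjlt hinv
    rw [hWg] at hjlt
    rw [hWio j hjc (ne_of_lt (hjlt.trans hwm))] at hinv
    by_cases hex : ∃ i0 : Fin n, i0 < g ∧ w i0 < w m
    · obtain ⟨i0, hi0, hwi0⟩ := hex
      have hmem : (i0, j) ∈ effRegion W :=
        effRegion_closed W _ hq (i0, j) (le_of_lt hi0) (le_refl j)
      rw [← hDW, mem_rothe] at hmem
      obtain ⟨hjw, -⟩ := hmem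
      rw [hWo i0 (ne_of_lt hi0) (ne_of_lt (hi0.trans hgm))] at hjw
      have a1 : (j:ℕ) < ((w i0 : Fin n) : ℕ) := hjw
      have a2 : ((w i0 : Fin n) : ℕ) < ((w m : Fin n) : ℕ) := hwi0
      omega
    · push_neg at hex
      have hex' : ∀ i0 : Fin n, i0 < g → w m < w i0 := by
        intro i0 h
        rcases (hex i0 h).lt_or_eq with h' | h'
        · exact h'
        · exfalso
          have := w.injective h'
          rw [← this] at h
          exact absurd (hgm.trans h) (lt_irrefl _)
      have hdom : IsDominant w := by
        apply isDominant_of_closed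
        rintro p hp ⟨i', j'⟩ hle1 hle2
        by_cases hpgc : p = (g, w m)
        · subst hpgc
          dsimp only at hle1 hle2
          by_cases hj'c : j' = w m
          · subst hj'c
            rcases hle1.lt_or_eq with h | h
            · rw [mem_rothe]
              refine ⟨hex' i' h, ?_⟩
              dsimp only
              rw [hminv]
              exact h.trans hgm
            · rw [show ((i', w m) : Fin n × Fin n) = (g, w m) from by rw [h]]
              exact hmemgc
          · have hj'lt : j' < w m := lt_of_le_of_ne hle2 hj'c
            have hj'j : j' ≤ j := Fin.le_def.mpr (by have a1 := Fin.lt_def.mp hj'lt; omega)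
            have hmem2 : (i', j') ∈ effRegion W := effRegion_closed W _ hq (i', j') hle1 hj'j
            rw [← hDW, hchar] at hmem2
            exact hmem2.1
        · have hp' : p ∈ rotheDiagram W := (hchar p).mpr ⟨hp, hpgc⟩
          rw [hDW] at hp'
          have := effRegion_closed W p hp' (i', j') hle1 hle2
          rw [← hDW, hchar] at this
          exact this.1
      exact hnd hdom
  refine ⟨?_, ?_, hA, hB⟩
  · have h1 : (effRegion W).card = (rotheDiagram w).card - 1 := by
      rw [← hDW, herase, Finset.card_erase_of_mem hmemgc]
    have h2 : (rotheDiagram w).card < (effRegion w).card := by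
      apply Finset.card_lt_card
      exact (rothe_subset_eff w).ssubset_of_ne hnd
    have h3 : 1 ≤ (rotheDiagram w).card := Finset.card_pos.mpr ⟨_, hmemgc⟩
    omega
  · rintro ⟨i, j⟩ hq hne hadj
    dsimp only at hadj
    rcases hadj with ⟨h1, h2 | h2⟩ | ⟨h1, h2 | h2⟩
    · -- (g, w m + 1)
      have hig : g = i := Fin.ext h1.symm
      subst hig
      rw [mem_rothe] at hq
      obtain ⟨hjb, hinv⟩ := hq
      dsimp only at hjb hinv
      have hcj : w m < j := Fin.lt_def.mpr (by omega)
      exact absurd hinv (not_lt.mpr (hbet j hcj hjb).le)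
    · -- (g, w m - 1)
      have hig : g = i := Fin.ext h1.symm
      subst hig
      have hjc : j ≠ w m := by intro h; rw [h] at h2; omega
      have hmem : (g, j) ∈ effRegion W := by
        rw [← hDW]
        refine (hchar _).mpr ⟨hq, ?_⟩
        intro h
        exact hjc (congrArg Prod.snd h)
      exact hB _ hmem ⟨rfl, h2⟩
    · -- (g+1, w m)
      have hj : j = w m := Fin.ext h1
      subst hj
      rw [mem_rothe] at hq
      obtain ⟨hlt, hinv⟩ := hq
      dsimp only at hlt hinv
      rw [hminv] at hinv
      have hgi : g < i := Fin.lt_def.mpr (by omega)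
      exact absurd hlt (not_lt.mpr (hless i hgi hinv).le)
    · -- (g-1, w m)
      have hj : j = w m := Fin.ext h1
      subst hj
      have hig : i ≠ g := by
        intro h
        rw [h] at h2
        omega
      have hmem : (i, w m) ∈ effRegion W := by
        rw [← hDW]
        refine (hchar _).mpr ⟨hq, ?_⟩
        intro h
        exact hig (congrArg Prod.fst h)
      exact hA _ hmem ⟨h2, rfl⟩
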